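/- Let α > 0 and let C, R, Q be independent random elements with C taking values in S^{d−1}, R a positive random variable with E[R^α] = 1, and Q a random orthogonal d × d matrix (Q' = Q^{−1} a.s.), such that law(QC) = law(C). Then the law P of (C, R·Q·C) belongs to M_α, satisfies ∫ ‖m‖^α P(ds, dm) = 1, and its adjoint measure satisfies P*(S × T) = E[1_S(QC) 1_T(C/R) R^α] for all Borel sets S ⊆ S^{d−1} and T ⊆ ℝ^d \ {0}. -/

import Mathlib

open MeasureTheory Filter Set
open scoped ENNReal Topology Classical

noncomputable section

/-- `ℝ^d` with the Euclidean norm. -/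
abbrev Ed (d : ℕ) : Type := EuclideanSpace ℝ (Fin d)

/-- The unit sphere `S^{d-1}` of `ℝ^d`. -/
def unitSphere (d : ℕ) : Set (Ed d) := Metric.sphere 0 1

/-- `∫ 1_{m ≠ 0} 1_S(m/‖m‖) ‖m‖^α P(ds, dm)`: the mass that `P` sends to the set of
directions `S ⊆ S^{d-1}`, weighted by `‖m‖^α`. -/
def dirMass (d : ℕ) (α : ℝ) (P : Measure (Ed d × Ed d)) (S : Set (Ed d)) : ℝ≥0∞ :=
  ∫⁻ p, Set.indicator {p : Ed d × Ed d | p.2 ≠ 0 ∧ ‖p.2‖⁻¹ • p.2 ∈ S}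
    (fun p => ENNReal.ofReal (‖p.2‖ ^ α)) p ∂P

/-- Membership in the class `M_α` of admissible distributions: probability measures
on `S^{d-1} × ℝ^d` (encoded as measures on `ℝ^d × ℝ^d` whose first marginal is
concentrated on the unit sphere) such that
`∫ 1_{m ≠ 0} 1_S(m/‖m‖) ‖m‖^α P(ds, dm) ≤ P(S × ℝ^d)` for every Borel `S ⊆ S^{d-1}`. -/
structure MemMalpha (d : ℕ) (α : ℝ) (P : Measure (Ed d × Ed d)) : Prop where
  prob : IsProbabilityMeasure P
  sphere : P {p : Ed d × Ed d | ‖p.1‖ = 1} = 1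
  adm : ∀ S : Set (Ed d), MeasurableSet S → S ⊆ unitSphere d →
    dirMass d α P S ≤ P (S ×ˢ (univ : Set (Ed d)))

/-- `Q` is the adjoint measure `P*` of `P ∈ M_α`: a Borel measure on
`S^{d-1} × ℝ^d` satisfying
`P*(S × {0}) = P(S × ℝ^d) − ∫ 1_{m ≠ 0} 1_S(m/‖m‖) ‖m‖^α P(ds, dm)` for Borel
`S ⊆ S^{d-1}`, and
`P*(E) = ∫ 1_{m ≠ 0} 1_E(m/‖m‖, s/‖m‖) ‖m‖^α P(ds, dm)` for Borel
`E ⊆ S^{d-1} × (ℝ^d \ {0})`. -/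
structure IsAdjoint (d : ℕ) (α : ℝ) (P Q : Measure (Ed d × Ed d)) : Prop where
  supp : Q {p : Ed d × Ed d | ‖p.1‖ ≠ 1} = 0
  eq_zero : ∀ S : Set (Ed d), MeasurableSet S → S ⊆ unitSphere d →
    Q (S ×ˢ ({0} : Set (Ed d))) = P (S ×ˢ (univ : Set (Ed d))) - dirMass d α P S
  eq_pos : ∀ E : Set (Ed d × Ed d), MeasurableSet E →
    E ⊆ (unitSphere d) ×ˢ ({0}ᶜ : Set (Ed d)) →
    Q E = ∫⁻ p, Set.indicator
        {p : Ed d × Ed d | p.2 ≠ 0 ∧ (‖p.2‖⁻¹ • p.2, ‖p.2‖⁻¹ • p.1) ∈ E}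
        (fun p => ENNReal.ofReal (‖p.2‖ ^ α)) p ∂P

/-- Borel measurable structure on `d × d` real matrices (entrywise). -/
instance (d : ℕ) : MeasurableSpace (Matrix (Fin d) (Fin d) ℝ) :=
  show MeasurableSpace (Fin d → Fin d → ℝ) from inferInstance

/-- Multiplication of a `d × d` matrix with a vector of `ℝ^d` (Euclidean space). -/
def mulVecE {d : ℕ} (A : Matrix (Fin d) (Fin d) ℝ) (v : Ed d) : Ed d :=
  (WithLp.equiv 2 (Fin d → ℝ)).symm (A.mulVec ((WithLp.equiv 2 (Fin d → ℝ)) v))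

/-- Orthogonal matrices preserve the Euclidean norm. -/
lemma norm_mulVecE {d : ℕ} {A : Matrix (Fin d) (Fin d) ℝ} (hA : A.transpose * A = 1)
    (v : Ed d) : ‖mulVecE A v‖ = ‖v‖ := by
  have key : ∀ w : Fin d → ℝ, dotProduct (A.mulVec w) (A.mulVec w) =
      dotProduct w w := by
    intro w
    rw [Matrix.dotProduct_mulVec, ← Matrix.mulVec_transpose, Matrix.mulVec_mulVec, hA,
      Matrix.one_mulVec]
  have h2 : ∀ w : Fin d → ℝ, ∑ i, ‖w i‖ ^ 2 = dotProduct w w := by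
    intro w; simp [dotProduct, Real.norm_eq_abs, sq_abs, sq]
  rw [EuclideanSpace.norm_eq, EuclideanSpace.norm_eq]
  simp only [mulVecE, WithLp.equiv_symm_apply, WithLp.ofLp_toLp]
  rw [h2, h2, key]
  rfl

lemma measurable_mulVecE_pair {d : ℕ} :
    Measurable (fun x : Matrix (Fin d) (Fin d) ℝ × Ed d => mulVecE x.1 x.2) := by
  have h : Measurable (fun x : Matrix (Fin d) (Fin d) ℝ × (Fin d → ℝ) => x.1.mulVec x.2) := by
    apply measurable_pi_lambda
    intro i
    simp only [Matrix.mulVec, dotProduct]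
    exact Finset.measurable_sum _ fun j _ =>
      ((measurable_pi_apply j).comp ((measurable_pi_apply i).comp measurable_fst)).mul
        ((measurable_pi_apply j).comp measurable_snd)
  exact (MeasurableEquiv.toLp 2 (Fin d → ℝ)).measurable.comp
    (h.comp (measurable_fst.prodMk
      ((MeasurableEquiv.toLp 2 (Fin d → ℝ)).symm.measurable.comp measurable_snd)))

lemma indep_key {d : ℕ} {Ω : Type*} [MeasurableSpace Ω] (ν : Measure Ω) [IsProbabilityMeasure ν]
    (C : Ω → Ed d) (R : Ω → ℝ) (Q : Ω → Matrix (Fin d) (Fin d) ℝ)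
    (hC : Measurable C) (hR : Measurable R) (hQ : Measurable Q)
    (hindep : ν.map (fun ω => (C ω, R ω, Q ω)) = (ν.map C).prod ((ν.map R).prod (ν.map Q)))
    (g : ℝ → ℝ≥0∞) (hg : Measurable g)
    (S : Set (Ed d)) (hS : MeasurableSet S) :
    ∫⁻ ω, ({x : Matrix (Fin d) (Fin d) ℝ × Ed d | mulVecE x.1 x.2 ∈ S}.indicator 1 (Q ω, C ω))
        * g (R ω) ∂ν
      = (∫⁻ ω, g (R ω) ∂ν)
        * ∫⁻ c, (ν.map Q) {q | mulVecE q c ∈ S} ∂(ν.map C) := by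
  have hA : MeasurableSet {x : Matrix (Fin d) (Fin d) ℝ × Ed d | mulVecE x.1 x.2 ∈ S} :=
    measurable_mulVecE_pair hS
  set F : Ed d × ℝ × Matrix (Fin d) (Fin d) ℝ → ℝ≥0∞ :=
    fun x => ({x : Matrix (Fin d) (Fin d) ℝ × Ed d | mulVecE x.1 x.2 ∈ S}.indicator 1 (x.2.2, x.1))
      * g x.2.1 with hF
  have hFmeas : Measurable F := by
    apply Measurable.mul
    · exact (measurable_one.indicator hA).comp
        ((measurable_snd.comp measurable_snd).prodMk measurable_fst)
    · exact hg.comp (measurable_fst.comp measurable_snd)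
  have step1 : ∫⁻ ω, F (C ω, R ω, Q ω) ∂ν
      = ∫⁻ x, F x ∂((ν.map C).prod ((ν.map R).prod (ν.map Q))) := by
    rw [← hindep]
    exact (lintegral_map hFmeas (hC.prodMk (hR.prodMk hQ))).symm
  have inner : ∀ c : Ed d, ∫⁻ y, F (c, y) ∂((ν.map R).prod (ν.map Q))
      = (∫⁻ r, g r ∂(ν.map R)) * (ν.map Q) {q | mulVecE q c ∈ S} := by
    intro c
    have hq : MeasurableSet {q : Matrix (Fin d) (Fin d) ℝ | mulVecE q c ∈ S} :=
      (measurable_mulVecE_pair.comp (measurable_id.prodMk measurable_const)) hS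
    have heq : ∀ y : ℝ × Matrix (Fin d) (Fin d) ℝ,
        F (c, y) = g y.1 * ({q : Matrix (Fin d) (Fin d) ℝ | mulVecE q c ∈ S}.indicator 1 y.2) := by
      intro y
      simp only [hF]
      rw [mul_comm]
      congr 1
    calc ∫⁻ y, F (c, y) ∂((ν.map R).prod (ν.map Q))
        = ∫⁻ y : ℝ × Matrix (Fin d) (Fin d) ℝ,
            g y.1 * ({q : Matrix (Fin d) (Fin d) ℝ | mulVecE q c ∈ S}.indicator 1 y.2)
            ∂((ν.map R).prod (ν.map Q)) := lintegral_congr heq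
      _ = (∫⁻ r, g r ∂(ν.map R))
            * ∫⁻ q, ({q : Matrix (Fin d) (Fin d) ℝ | mulVecE q c ∈ S}.indicator 1 q)
                ∂(ν.map Q) :=
          lintegral_prod_mul hg.aemeasurable (measurable_one.indicator hq).aemeasurable
      _ = (∫⁻ r, g r ∂(ν.map R)) * (ν.map Q) {q | mulVecE q c ∈ S} := by
          rw [lintegral_indicator_one hq]
  have hm : Measurable fun c : Ed d => (ν.map Q) {q | mulVecE q c ∈ S} := by
    have hA' : MeasurableSet {x : Ed d × Matrix (Fin d) (Fin d) ℝ | mulVecE x.2 x.1 ∈ S} :=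
      (measurable_mulVecE_pair.comp (measurable_snd.prodMk measurable_fst)) hS
    exact measurable_measure_prodMk_left hA'
  calc ∫⁻ ω, ({x : Matrix (Fin d) (Fin d) ℝ × Ed d | mulVecE x.1 x.2 ∈ S}.indicator 1 (Q ω, C ω))
        * g (R ω) ∂ν
      = ∫⁻ x, F x ∂((ν.map C).prod ((ν.map R).prod (ν.map Q))) := step1
    _ = ∫⁻ c, ∫⁻ y, F (c, y) ∂((ν.map R).prod (ν.map Q)) ∂(ν.map C) :=
        lintegral_prod _ hFmeas.aemeasurable
    _ = ∫⁻ c, (∫⁻ r, g r ∂(ν.map R)) * (ν.map Q) {q | mulVecE q c ∈ S} ∂(ν.map C) :=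
        lintegral_congr inner
    _ = (∫⁻ r, g r ∂(ν.map R)) * ∫⁻ c, (ν.map Q) {q | mulVecE q c ∈ S} ∂(ν.map C) :=
        lintegral_const_mul _ hm
    _ = (∫⁻ ω, g (R ω) ∂ν) * ∫⁻ c, (ν.map Q) {q | mulVecE q c ∈ S} ∂(ν.map C) := by
        rw [lintegral_map hg hR]

/-- Example 4.4 (first part): let `C`, `R`, `Q` be independent with `C` taking values
in `S^{d-1}`, `R > 0` with `E[R^α] = 1`, and `Q` a random orthogonal matrix with
`law (Q C) = law C`.  Then the law `P` of `(C, R • Q C)` belongs to `M_α`, satisfies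
`∫ ‖m‖^α P(ds, dm) = 1`, and its adjoint satisfies
`P*(S × T) = E[1_S(Q C) 1_T(C / R) R^α]` for Borel `S ⊆ S^{d-1}` and
`T ⊆ ℝ^d \ {0}`. -/
theorem multiplicative_example_adjoint
    {d : ℕ} {α : ℝ} (hα : 0 < α)
    {Ω : Type*} [MeasurableSpace Ω] (ν : Measure Ω) [IsProbabilityMeasure ν]
    (C : Ω → Ed d) (R : Ω → ℝ) (Q : Ω → Matrix (Fin d) (Fin d) ℝ)
    (hC : Measurable C) (hR : Measurable R) (hQ : Measurable Q)
    (hCsphere : ∀ ω, ‖C ω‖ = 1)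
    (hRpos : ∀ ω, 0 < R ω)
    (hRmoment : ∫ ω, R ω ^ α ∂ν = 1)
    (hQorth : ∀ᵐ ω ∂ν, (Q ω).transpose * Q ω = 1)
    -- C, R, Q independent :
    (hindep : ν.map (fun ω => (C ω, R ω, Q ω))
      = (ν.map C).prod ((ν.map R).prod (ν.map Q)))
    -- law (Q C) = law C :
    (hQC : ν.map (fun ω => mulVecE (Q ω) (C ω)) = ν.map C) :
    MemMalpha d α (ν.map fun ω => (C ω, R ω • mulVecE (Q ω) (C ω))) ∧
    (∫⁻ p, ENNReal.ofReal (‖p.2‖ ^ α)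
        ∂(ν.map fun ω => (C ω, R ω • mulVecE (Q ω) (C ω))) = 1) ∧
    ∀ P' : Measure (Ed d × Ed d),
      IsAdjoint d α (ν.map fun ω => (C ω, R ω • mulVecE (Q ω) (C ω))) P' →
      ∀ S T : Set (Ed d), MeasurableSet S → S ⊆ unitSphere d →
        MeasurableSet T → (0 : Ed d) ∉ T →
        P' (S ×ˢ T) = ∫⁻ ω, Set.indicator
            {ω | mulVecE (Q ω) (C ω) ∈ S ∧ (R ω)⁻¹ • C ω ∈ T}
            (fun ω => ENNReal.ofReal (R ω ^ α)) ω ∂ν := by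
  have hX : Measurable fun ω => mulVecE (Q ω) (C ω) :=
    measurable_mulVecE_pair.comp (hQ.prodMk hC)
  have hM : Measurable fun ω => R ω • mulVecE (Q ω) (C ω) := hR.smul hX
  have hT0 : Measurable fun ω => (C ω, R ω • mulVecE (Q ω) (C ω)) := hC.prodMk hM
  have hof : Measurable fun p : Ed d × Ed d => ENNReal.ofReal (‖p.2‖ ^ α) :=
    ENNReal.measurable_ofReal.comp
      ((Real.continuous_rpow_const hα.le).measurable.comp measurable_snd.norm)
  -- a.e. facts
  have hgood : ∀ᵐ ω ∂ν, ‖mulVecE (Q ω) (C ω)‖ = 1 := by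
    filter_upwards [hQorth] with ω h
    rw [norm_mulVecE h, hCsphere]
  -- integrability of R^α
  have hRint : Integrable (fun ω => R ω ^ α) ν := by
    by_contra h
    rw [integral_undef h] at hRmoment
    exact one_ne_zero hRmoment.symm
  have hlint : ∫⁻ ω, ENNReal.ofReal (R ω ^ α) ∂ν = 1 := by
    rw [← ofReal_integral_eq_lintegral_ofReal hRint
      (Filter.Eventually.of_forall fun ω => (Real.rpow_pos_of_pos (hRpos ω) α).le),
      hRmoment, ENNReal.ofReal_one]
  have hofR : Measurable fun r : ℝ => ENNReal.ofReal (r ^ α) :=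
    ENNReal.measurable_ofReal.comp (Real.continuous_rpow_const hα.le).measurable
  -- key independence identity
  have hkey : ∀ S : Set (Ed d), MeasurableSet S →
      ∫⁻ ω, Set.indicator {ω | mulVecE (Q ω) (C ω) ∈ S}
        (fun ω => ENNReal.ofReal (R ω ^ α)) ω ∂ν
      = ν ((fun ω => mulVecE (Q ω) (C ω)) ⁻¹' S) := by
    intro S hS
    have h1 := indep_key ν C R Q hC hR hQ hindep (fun r => ENNReal.ofReal (r ^ α)) hofR S hS
    have h2 := indep_key ν C R Q hC hR hQ hindep (fun _ => 1) measurable_const S hS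
    rw [hlint, one_mul] at h1
    rw [lintegral_one, measure_univ, one_mul] at h2
    have e1 : ∫⁻ ω, ({x : Matrix (Fin d) (Fin d) ℝ × Ed d | mulVecE x.1 x.2 ∈ S}.indicator
            1 (Q ω, C ω)) * ENNReal.ofReal (R ω ^ α) ∂ν
        = ∫⁻ ω, Set.indicator {ω | mulVecE (Q ω) (C ω) ∈ S}
            (fun ω => ENNReal.ofReal (R ω ^ α)) ω ∂ν := by
      apply lintegral_congr fun ω => ?_
      by_cases hx : mulVecE (Q ω) (C ω) ∈ S <;> simp [Set.indicator_apply, hx]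
    have e2 : ∫⁻ ω, ({x : Matrix (Fin d) (Fin d) ℝ × Ed d | mulVecE x.1 x.2 ∈ S}.indicator
            1 (Q ω, C ω)) * (1 : ℝ≥0∞) ∂ν
        = ν ((fun ω => mulVecE (Q ω) (C ω)) ⁻¹' S) := by
      simp only [mul_one]
      rw [show (∫⁻ ω, ({x : Matrix (Fin d) (Fin d) ℝ × Ed d | mulVecE x.1 x.2 ∈ S}.indicator
            1 (Q ω, C ω)) ∂ν)
          = ∫⁻ ω, Set.indicator ((fun ω => mulVecE (Q ω) (C ω)) ⁻¹' S) 1 ω ∂ν from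
        lintegral_congr fun ω => rfl]
      exact lintegral_indicator_one (hX hS)
    rw [e1] at h1
    rw [e2] at h2
    rw [h1, ← h2]
  have hXC : ∀ S : Set (Ed d), MeasurableSet S →
      ν ((fun ω => mulVecE (Q ω) (C ω)) ⁻¹' S) = ν (C ⁻¹' S) := by
    intro S hS
    rw [← Measure.map_apply hX hS, hQC, Measure.map_apply hC hS]
  -- pointwise direction facts
  have hptwise : ∀ ω, ‖mulVecE (Q ω) (C ω)‖ = 1 →
      R ω • mulVecE (Q ω) (C ω) ≠ 0 ∧
      ‖R ω • mulVecE (Q ω) (C ω)‖ = R ω ∧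
      ‖R ω • mulVecE (Q ω) (C ω)‖⁻¹ • (R ω • mulVecE (Q ω) (C ω)) = mulVecE (Q ω) (C ω) := by
    intro ω h
    have hRne : R ω ≠ 0 := (hRpos ω).ne'
    have hXne : mulVecE (Q ω) (C ω) ≠ 0 := by
      intro h0; rw [h0, norm_zero] at h; exact one_ne_zero h.symm
    have hnorm : ‖R ω • mulVecE (Q ω) (C ω)‖ = R ω := by
      rw [norm_smul, h, mul_one, Real.norm_eq_abs, abs_of_pos (hRpos ω)]
    refine ⟨smul_ne_zero hRne hXne, hnorm, ?_⟩
    rw [hnorm, smul_smul, inv_mul_cancel₀ hRne, one_smul]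
  -- dirMass identity
  have hdirset : ∀ S : Set (Ed d), MeasurableSet S →
      MeasurableSet {p : Ed d × Ed d | p.2 ≠ 0 ∧ ‖p.2‖⁻¹ • p.2 ∈ S} := by
    intro S hS
    exact ((measurable_snd (measurableSet_singleton (0 : Ed d))).compl).inter
      ((measurable_snd.norm.inv.smul measurable_snd) hS)
  have hdirM : ∀ S : Set (Ed d), MeasurableSet S →
      dirMass d α (ν.map fun ω => (C ω, R ω • mulVecE (Q ω) (C ω))) S
      = ∫⁻ ω, Set.indicator {ω | mulVecE (Q ω) (C ω) ∈ S}
          (fun ω => ENNReal.ofReal (R ω ^ α)) ω ∂ν := by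
    intro S hS
    rw [dirMass, lintegral_map (hof.indicator (hdirset S hS)) hT0]
    apply lintegral_congr_ae
    filter_upwards [hgood] with ω h
    obtain ⟨hMne, hnorm, hdir⟩ := hptwise ω h
    have hdir3 : (R ω)⁻¹ • R ω • mulVecE (Q ω) (C ω) = mulVecE (Q ω) (C ω) := by
      rw [smul_smul, inv_mul_cancel₀ (hRpos ω).ne', one_smul]
    by_cases hx : mulVecE (Q ω) (C ω) ∈ S <;>
      simp [Set.indicator_apply, hMne, hdir, hdir3, hnorm, hx]
  refine ⟨⟨Measure.isProbabilityMeasure_map hT0.aemeasurable, ?_, ?_⟩, ?_, ?_⟩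
  · -- sphere
    have hs1 : MeasurableSet {p : Ed d × Ed d | ‖p.1‖ = 1} :=
      measurable_fst.norm (measurableSet_singleton 1)
    rw [Measure.map_apply hT0 hs1]
    have : (fun ω => (C ω, R ω • mulVecE (Q ω) (C ω))) ⁻¹' {p : Ed d × Ed d | ‖p.1‖ = 1}
        = univ := eq_univ_of_forall fun ω => hCsphere ω
    rw [this, measure_univ]
  · -- adm
    intro S hS _
    rw [hdirM S hS, hkey S hS, hXC S hS,
      Measure.map_apply hT0 (hS.prod MeasurableSet.univ)]
    apply le_of_eq
    congr 1
    ext ω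
    simp
  · -- total mass
    rw [lintegral_map hof hT0, ← hlint]
    apply lintegral_congr_ae
    filter_upwards [hgood] with ω h
    obtain ⟨_, hnorm, _⟩ := hptwise ω h
    rw [hnorm]
  · -- adjoint identity
    intro P' hadj S T hS hSsub hT hT0mem
    have hE : MeasurableSet (S ×ˢ T) := hS.prod hT
    have hEsub : S ×ˢ T ⊆ (unitSphere d) ×ˢ ({0}ᶜ : Set (Ed d)) := by
      apply Set.prod_mono hSsub
      intro x hx
      simp only [mem_compl_iff, mem_singleton_iff]
      rintro rfl
      exact hT0mem hx
    rw [hadj.eq_pos (S ×ˢ T) hE hEsub]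
    have hEset : MeasurableSet {p : Ed d × Ed d |
        p.2 ≠ 0 ∧ (‖p.2‖⁻¹ • p.2, ‖p.2‖⁻¹ • p.1) ∈ S ×ˢ T} := by
      exact ((measurable_snd (measurableSet_singleton (0 : Ed d))).compl).inter
        (((measurable_snd.norm.inv.smul measurable_snd).prodMk
          (measurable_snd.norm.inv.smul measurable_fst)) hE)
    rw [lintegral_map (hof.indicator hEset) hT0]
    apply lintegral_congr_ae
    filter_upwards [hgood] with ω h
    obtain ⟨hMne, hnorm, hdir⟩ := hptwise ω h
    have hdir2 : ‖R ω • mulVecE (Q ω) (C ω)‖⁻¹ • C ω = (R ω)⁻¹ • C ω := by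
      rw [hnorm]
    have hdir3 : (R ω)⁻¹ • R ω • mulVecE (Q ω) (C ω) = mulVecE (Q ω) (C ω) := by
      rw [smul_smul, inv_mul_cancel₀ (hRpos ω).ne', one_smul]
    by_cases hx : mulVecE (Q ω) (C ω) ∈ S <;>
      by_cases hy : (R ω)⁻¹ • C ω ∈ T <;>
      simp [Set.indicator_apply, hMne, hdir, hdir2, hdir3, hnorm, hx, hy, Set.mem_prod]
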